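/- (Completeness of the Schnorr verification equation) Let G be a commutative group and q a prime number such that every element h of G satisfies h ^ q = 1. Let g : G, let a, x, k : ZMod q, and set the long-term public key A = g ^ (a.val), the commitment X = g ^ (x.val), and the response ρ = x + a * k (computed in ZMod q). Then the verifier's check succeeds: g ^ (ρ.val) = X * A ^ (k.val). -/
import Mathlib

/-- Completeness of the Schnorr verification equation: with public key
`A = g^a`, commitment `X = g^x`, challenge `k`, and response `ρ = x + a·k`
computed in `ZMod q`, the verifier's check `g^ρ = X · A^k` succeeds. -/
theorem schnorr_verification_complete {G : Type*} [CommGroup G]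
    (q : ℕ) (hq : Nat.Prime q) (hG : ∀ h : G, h ^ q = 1)
    (g : G) (a x k : ZMod q) (A X : G) (ρ : ZMod q)
    (hA : A = g ^ (a.val)) (hX : X = g ^ (x.val)) (hρ : ρ = x + a * k) :
    g ^ (ρ.val) = X * A ^ (k.val) := by
  haveI : NeZero q := ⟨hq.pos.ne'⟩
  subst hA hX hρ
  rw [← pow_mul, ← pow_add, pow_eq_pow_mod (x.val + a.val * k.val) (hG g)]
  congr 1
  simp [ZMod.val_add, ZMod.val_mul, Nat.add_mod]
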